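/- Let p(q) = ∑_{k=0}^{n} q^k · a_k with a_0, …, a_n ∈ ℍ, and let M ≥ 0 be such that ‖p(q)‖ ≤ M for every quaternion q with ‖q‖ = 1. Then for every quaternion q with ‖q‖ ≥ 1 one has ‖p(q)‖ ≤ M · ‖q‖^n. -/

import Mathlib

open Finset Quaternion

private theorem slice_norm' (I : Quaternion ℝ) (hI : I * I = -1) (z : ℂ) :
    ‖Complex.liftAux I hI z‖ = ‖z‖ := by
  have hsq : I ^ 2 = -1 := by rw [sq, hI]
  have hns : normSq I = 1 := by
    have h2 : (normSq I) ^ 2 = 1 := by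
      have := map_pow normSq I 2
      rw [hsq] at this
      simpa using this.symm
    nlinarith [normSq_nonneg (a := I)]
  have hre : I.re = 0 := by
    apply sq_eq_neg_normSq.mp
    rw [hsq, hns]
    norm_num
  have key : normSq (Complex.liftAux I hI z) = Complex.normSq z := by
    rw [Complex.liftAux_apply]
    simp only [Quaternion.normSq_add, Quaternion.normSq_coe, Quaternion.normSq_smul, hns,
      Complex.normSq_apply, Quaternion.re_mul, Quaternion.re_star, Quaternion.imI_star,
      Quaternion.imJ_star, Quaternion.imK_star, Quaternion.re_smul, Quaternion.imI_smul,
      Quaternion.imJ_smul, Quaternion.imK_smul, Quaternion.re_coe, Quaternion.imI_coe,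
      Quaternion.imJ_coe, Quaternion.imK_coe, hre, Quaternion.algebraMap_def, smul_zero,
      smul_eq_mul, mul_zero, zero_mul]
    ring
  have h1 : ‖Complex.liftAux I hI z‖ * ‖Complex.liftAux I hI z‖ = ‖z‖ * ‖z‖ := by
    rw [← Quaternion.normSq_eq_norm_mul_self, key, Complex.normSq_eq_norm_sq, sq]
  calc ‖Complex.liftAux I hI z‖
      = Real.sqrt (‖Complex.liftAux I hI z‖ * ‖Complex.liftAux I hI z‖) :=
        (Real.sqrt_mul_self (norm_nonneg _)).symm
    _ = Real.sqrt (‖z‖ * ‖z‖) := by rw [h1]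
    _ = ‖z‖ := Real.sqrt_mul_self (norm_nonneg _)

private theorem exists_slice' (q : Quaternion ℝ) :
    ∃ (I : Quaternion ℝ) (hI : I * I = -1) (z : ℂ), Complex.liftAux I hI z = q := by
  by_cases hv : q.im = 0
  · refine ⟨@id (Quaternion ℝ) ⟨0, 1, 0, 0⟩, ?_, ⟨q.re, 0⟩, ?_⟩
    · exact (by ext <;> simp [QuaternionAlgebra.mk_mul_mk] : (⟨0, 1, 0, 0⟩ : Quaternion ℝ) * ⟨0, 1, 0, 0⟩ = -1)
    · erw [Complex.liftAux_apply]
      simp only [zero_smul, add_zero]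
      conv_rhs => rw [← Quaternion.re_add_im q, hv, add_zero]
      simp [Quaternion.algebraMap_def]
  · have hnv : ‖q.im‖ ≠ 0 := norm_ne_zero_iff.mpr hv
    refine ⟨‖q.im‖⁻¹ • q.im, ?_, ⟨q.re, ‖q.im‖⟩, ?_⟩
    · rw [smul_mul_smul_comm, ← sq q.im, Quaternion.im_sq,
        Quaternion.normSq_eq_norm_mul_self, smul_neg, Quaternion.smul_coe]
      have h1 : ‖q.im‖⁻¹ * ‖q.im‖⁻¹ * (‖q.im‖ * ‖q.im‖) = 1 := by
        field_simp
      rw [h1, Quaternion.coe_one]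
    · rw [Complex.liftAux_apply]
      rw [smul_smul, mul_inv_cancel₀ hnv, one_smul]
      simpa [Quaternion.algebraMap_def] using Quaternion.re_add_im q

/-- Growth estimate for quaternionic polynomials: if `‖p(q)‖ ≤ M` on the unit sphere,
then `‖p(q)‖ ≤ M ‖q‖^n` for `‖q‖ ≥ 1`. -/
theorem growth_estimate_quaternion (n : ℕ) (a : ℕ → Quaternion ℝ) (M : ℝ) (hM : 0 ≤ M)
    (hbound : ∀ q : Quaternion ℝ, ‖q‖ = 1 →
      ‖∑ k ∈ Finset.range (n + 1), q ^ k * a k‖ ≤ M)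
    (q : Quaternion ℝ) (hq : 1 ≤ ‖q‖) :
    ‖∑ k ∈ Finset.range (n + 1), q ^ k * a k‖ ≤ M * ‖q‖ ^ n := by
  obtain ⟨I, hI, z, hz⟩ := exists_slice' q
  set ψ : ℂ →ₐ[ℝ] Quaternion ℝ := Complex.liftAux I hI with hψdef
  have hψ : ∀ w : ℂ, ‖ψ w‖ = ‖w‖ := slice_norm' I hI
  letI instM : Module ℂ (Quaternion ℝ) := Module.compHom _ ψ.toRingHom
  have hsmul : ∀ (c : ℂ) (x : Quaternion ℝ), c • x = ψ c * x := fun c x => rfl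
  letI : NormedSpace ℂ (Quaternion ℝ) :=
    { instM with
      norm_smul_le := fun c x => by
        rw [hsmul, norm_mul, hψ] }
  letI : IsScalarTower ℂ ℂ (Quaternion ℝ) :=
    ⟨fun c d x => by
      rw [hsmul, hsmul, hsmul, smul_eq_mul, map_mul, mul_assoc]⟩
  -- norm facts about z
  have hzq : ‖z‖ = ‖q‖ := by rw [← hz, hψ]
  have hz1 : 1 ≤ ‖z‖ := hzq ▸ hq
  have hz0 : z ≠ 0 := by
    intro h
    rw [h, norm_zero] at hz1
    linarith
  -- the reversed polynomial
  set G : ℂ → Quaternion ℝ := fun w => ∑ k ∈ Finset.range (n + 1), w ^ (n - k) • a k with hG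
  have hdiff : Differentiable ℂ G :=
    Differentiable.fun_sum fun k _ => (differentiable_pow (n - k)).smul_const (a k)
  -- boundary bound
  have hGbound : ∀ w ∈ frontier (Metric.ball (0 : ℂ) 1), ‖G w‖ ≤ M := by
    intro w hw
    rw [frontier_ball (0 : ℂ) one_ne_zero, mem_sphere_zero_iff_norm] at hw
    have hw0 : w ≠ 0 := by
      intro h; rw [h, norm_zero] at hw; exact one_ne_zero hw.symm
    have key : G w = ψ (w ^ n) * ∑ k ∈ Finset.range (n + 1), (ψ w⁻¹) ^ k * a k := by
      rw [hG, mul_sum]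
      refine Finset.sum_congr rfl fun k hk => ?_
      have hk' : k ≤ n := Nat.lt_succ_iff.mp (Finset.mem_range.mp hk)
      rw [hsmul, ← map_pow ψ w⁻¹ k, ← mul_assoc, ← map_mul ψ (w ^ n) (w⁻¹ ^ k)]
      congr 2
      rw [pow_sub₀ w hw0 hk', inv_pow]
    rw [key, norm_mul, hψ, norm_pow, hw, one_pow, one_mul]
    exact hbound _ (by rw [hψ, norm_inv, hw, inv_one])
  -- maximum modulus principle
  have hGmax : ∀ w : ℂ, ‖w‖ ≤ 1 → ‖G w‖ ≤ M := by
    intro w hw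
    refine Complex.norm_le_of_forall_mem_frontier_norm_le Metric.isBounded_ball
      hdiff.diffContOnCl hGbound ?_
    rw [closure_ball (0 : ℂ) one_ne_zero, Metric.mem_closedBall, dist_zero_right]
    exact hw
  -- relate p(q) to G(z⁻¹)
  have hfin : ∑ k ∈ Finset.range (n + 1), q ^ k * a k = ψ (z ^ n) * G z⁻¹ := by
    rw [hG, mul_sum]
    refine Finset.sum_congr rfl fun k hk => ?_
    have hk' : k ≤ n := Nat.lt_succ_iff.mp (Finset.mem_range.mp hk)
    rw [hsmul, ← mul_assoc, ← map_mul ψ (z ^ n) (z⁻¹ ^ (n - k)), ← hz, ← map_pow ψ z k]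
    congr 2
    rw [inv_pow, ← pow_sub₀ z hz0 (Nat.sub_le n k), Nat.sub_sub_self hk']
  have hGz : ‖G z⁻¹‖ ≤ M := hGmax z⁻¹ (by
    rw [norm_inv]
    exact inv_le_one_of_one_le₀ hz1)
  calc ‖∑ k ∈ Finset.range (n + 1), q ^ k * a k‖
      = ‖ψ (z ^ n)‖ * ‖G z⁻¹‖ := by rw [hfin, norm_mul]
    _ = ‖z‖ ^ n * ‖G z⁻¹‖ := by rw [hψ, norm_pow]
    _ ≤ ‖z‖ ^ n * M := by
        exact mul_le_mul_of_nonneg_left hGz (pow_nonneg (norm_nonneg _) n)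
    _ = M * ‖q‖ ^ n := by rw [hzq, mul_comm]
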